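/- Let {x_k} be the RK iterates for the system Ãx ≈ b̃ with arbitrary initial point x_0 ∈ ℝⁿ. Let σ̃_j > 0 be a nonzero singular value of Ã with associated left singular vector ũ_j ∈ ℝᵐ and right singular vector ṽ_j ∈ ℝⁿ (unit vectors with Ã ṽ_j = σ̃_j ũ_j and Ãᵀ ũ_j = σ̃_j ṽ_j). Then for every x_* ∈ ℝⁿ and every k ≥ 0: 𝔼⟨x_k − x_0ⁿ − x_*ʳ, ṽ_j⟩ = (1 − σ̃_j²/‖Ã‖_F²)^k ⟨x_0ʳ − x_*ʳ, ṽ_j⟩ − [1 − (1 − σ̃_j²/‖Ã‖_F²)^k] · ⟨Ã x_* − b̃, ũ_j⟩/σ̃_j. -/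

import Mathlib

open Matrix

noncomputable section

namespace RK

/-- The Euclidean inner product on `Fin n → ℝ`. -/
def dot {n : ℕ} (v w : Fin n → ℝ) : ℝ := ∑ i, v i * w i

/-- The squared Euclidean norm on `Fin n → ℝ`. -/
def normSq {n : ℕ} (v : Fin n → ℝ) : ℝ := ∑ i, v i ^ 2

/-- The Euclidean norm on `Fin n → ℝ`. -/
def euclNorm {n : ℕ} (v : Fin n → ℝ) : ℝ := Real.sqrt (normSq v)

/-- The squared Frobenius norm of a matrix. -/
def frobSq {m n : ℕ} (A : Matrix (Fin m) (Fin n) ℝ) : ℝ := ∑ i, ∑ j, A i j ^ 2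

/-- One step of the (randomized) Kaczmarz method for the system `A x ≈ b`, using row `i`:
`x ↦ x - ((aᵢᵀ x - bᵢ) / ‖aᵢ‖²) aᵢ`. -/
def rkStep {m n : ℕ} (A : Matrix (Fin m) (Fin n) ℝ) (b : Fin m → ℝ) (i : Fin m)
    (x : Fin n → ℝ) : Fin n → ℝ :=
  x - ((dot (A i) x - b i) / normSq (A i)) • A i

/-- `rkExp A b x0 k f` is the expectation `𝔼 f(x_k)` of `f` evaluated at the `k`-th iterate of the
randomized Kaczmarz algorithm applied to `A x ≈ b` started at `x0`, where at each step the row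
index `i` is drawn independently at random with probability `‖aᵢ‖² / ‖A‖_F²`. -/
def rkExp {m n : ℕ} (A : Matrix (Fin m) (Fin n) ℝ) (b : Fin m → ℝ) (x0 : Fin n → ℝ) :
    ℕ → ((Fin n → ℝ) → ℝ) → ℝ
  | 0, f => f x0
  | k + 1, f => rkExp A b x0 k fun x => ∑ i, normSq (A i) / frobSq A * f (rkStep A b i x)

/-- The four Penrose conditions: `B` is the Moore–Penrose pseudoinverse of `A`. -/
def IsMoorePenrose {m n : ℕ} (A : Matrix (Fin m) (Fin n) ℝ)
    (B : Matrix (Fin n) (Fin m) ℝ) : Prop :=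
  A * B * A = A ∧ B * A * B = B ∧ (A * B)ᵀ = A * B ∧ (B * A)ᵀ = B * A

/-- The row space `range(Aᵀ)` of a matrix `A`. -/
def rowSpace {m n : ℕ} (A : Matrix (Fin m) (Fin n) ℝ) : Set (Fin n → ℝ) :=
  {v | ∃ u : Fin m → ℝ, v = Aᵀ.mulVec u}

/-- The null space (kernel) of a matrix `A`. -/
def nullSpace {m n : ℕ} (A : Matrix (Fin m) (Fin n) ℝ) : Set (Fin n → ℝ) :=
  {v | A.mulVec v = 0}

/-- `σ` is the smallest nonzero singular value of `A`: `σ > 0`, `σ²` is an eigenvalue of `AᵀA`,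
and `σ²` is less than or equal to every nonzero eigenvalue of `AᵀA`. -/
def IsSmallestNonzeroSingularValue {m n : ℕ} (A : Matrix (Fin m) (Fin n) ℝ) (σ : ℝ) : Prop :=
  0 < σ ∧ (∃ v : Fin n → ℝ, v ≠ 0 ∧ (Aᵀ * A).mulVec v = σ ^ 2 • v) ∧
    ∀ μ : ℝ, μ ≠ 0 → (∃ v : Fin n → ℝ, v ≠ 0 ∧ (Aᵀ * A).mulVec v = μ • v) → σ ^ 2 ≤ μ

lemma dot_sub_smul {n : ℕ} (x w v : Fin n → ℝ) (c : ℝ) :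
    dot (x - c • w) v = dot x v - c * dot w v := by
  simp [dot, sub_mul, Finset.sum_sub_distrib, Finset.mul_sum, mul_assoc]

lemma dot_sub_left {n : ℕ} (x y v : Fin n → ℝ) :
    dot (x - y) v = dot x v - dot y v := by
  simp [dot, sub_mul, Finset.sum_sub_distrib]

lemma dot_add_left {n : ℕ} (x y v : Fin n → ℝ) :
    dot (x + y) v = dot x v + dot y v := by
  simp [dot, add_mul, Finset.sum_add_distrib]

lemma dot_smul_right {n : ℕ} (x w : Fin n → ℝ) (c : ℝ) :
    dot x (c • w) = c * dot x w := by
  simp [dot, Finset.mul_sum]; apply Finset.sum_congr rfl; intros; ring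

lemma dot_mulVec {m n : ℕ} (A : Matrix (Fin m) (Fin n) ℝ) (x : Fin n → ℝ) (u : Fin m → ℝ) :
    dot (A.mulVec x) u = dot x (Aᵀ.mulVec u) := by
  simp only [dot, Matrix.mulVec, dotProduct, Finset.sum_mul, Finset.mul_sum,
    Matrix.transpose_apply]
  rw [Finset.sum_comm]
  apply Finset.sum_congr rfl; intro i _; apply Finset.sum_congr rfl; intro j _; ring

lemma dot_rows {m n : ℕ} (A : Matrix (Fin m) (Fin n) ℝ) (x : Fin n → ℝ) (i : Fin m) :
    dot (A i) x = A.mulVec x i := rfl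

lemma frobSq_eq_sum {m n : ℕ} (A : Matrix (Fin m) (Fin n) ℝ) :
    frobSq A = ∑ i, normSq (A i) := rfl

lemma normSq_pos {n : ℕ} (w : Fin n → ℝ) (hw : w ≠ 0) : 0 < normSq w := by
  rcases Function.ne_iff.mp hw with ⟨j, hj⟩
  have hj' : w j ≠ 0 := by simpa using hj
  have : (0:ℝ) < w j ^ 2 := by positivity
  exact lt_of_lt_of_le this (Finset.single_le_sum (f := fun i => w i ^ 2)
    (fun i _ => by positivity) (Finset.mem_univ j))

lemma frobSq_pos {m n : ℕ} (A : Matrix (Fin m) (Fin n) ℝ) (hA : A ≠ 0) : 0 < frobSq A := by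
  rcases Function.ne_iff.mp hA with ⟨i, hi⟩
  have hi' : A i ≠ 0 := hi
  rw [frobSq_eq_sum]
  exact lt_of_lt_of_le (normSq_pos _ hi') (Finset.single_le_sum (f := fun i => normSq (A i))
    (fun i _ => Finset.sum_nonneg fun j _ => by positivity) (Finset.mem_univ i))

lemma step_sum {m n : ℕ} (A : Matrix (Fin m) (Fin n) ℝ) (b : Fin m → ℝ)
    (hF : frobSq A ≠ 0) (hrows : ∀ i, A i ≠ 0) (σ : ℝ)
    (u : Fin m → ℝ) (v : Fin n → ℝ)
    (hAv : A.mulVec v = σ • u) (hAtu : Aᵀ.mulVec u = σ • v) (α β : ℝ) (x : Fin n → ℝ) :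
    (∑ i, normSq (A i) / frobSq A * (α * dot (rkStep A b i x) v + β))
      = α * (1 - σ ^ 2 / frobSq A) * dot x v + (α * σ * dot b u / frobSq A + β) := by
  have hni : ∀ i, normSq (A i) ≠ 0 := fun i => (normSq_pos _ (hrows i)).ne'
  have hrowv : ∀ i, dot (A i) v = σ * u i := by
    intro i; rw [dot_rows, hAv]; simp
  have h1 : ∀ i ∈ Finset.univ, normSq (A i) / frobSq A * (α * dot (rkStep A b i x) v + β)
      = normSq (A i) / frobSq A * (α * dot x v + β)
        - α / frobSq A * ((dot (A i) x - b i) * (σ * u i)) := by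
    intro i _
    rw [rkStep, dot_sub_smul, hrowv]
    field_simp [hni i]
    ring
  rw [Finset.sum_congr rfl h1, Finset.sum_sub_distrib]
  have e1 : ∑ i, normSq (A i) / frobSq A * (α * dot x v + β) = α * dot x v + β := by
    simp only [div_mul_eq_mul_div]
    rw [← Finset.sum_div, ← Finset.sum_mul, ← frobSq_eq_sum, mul_comm,
      mul_div_assoc, div_self hF, mul_one]
  have hAxu : dot (A.mulVec x) u = σ * dot x v := by
    rw [dot_mulVec, hAtu, dot_smul_right]
  have e2 : ∑ i, α / frobSq A * ((dot (A i) x - b i) * (σ * u i))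
      = α / frobSq A * (σ ^ 2 * dot x v - σ * dot b u) := by
    rw [← Finset.mul_sum]
    congr 1
    have : ∑ i, (dot (A i) x - b i) * (σ * u i)
        = σ * (dot (A.mulVec x) u - dot b u) := by
      simp only [dot_rows, dot, Matrix.mulVec, dotProduct, mul_sub, Finset.mul_sum,
        ← Finset.sum_sub_distrib]
      apply Finset.sum_congr rfl; intros; ring
    rw [this, hAxu]; ring
  rw [e1, e2]
  field_simp
  ring

lemma rkExp_affine {m n : ℕ} (A : Matrix (Fin m) (Fin n) ℝ) (b : Fin m → ℝ)
    (hF : frobSq A ≠ 0) (hrows : ∀ i, A i ≠ 0) (σ : ℝ) (hσ : σ ≠ 0)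
    (u : Fin m → ℝ) (v : Fin n → ℝ)
    (hAv : A.mulVec v = σ • u) (hAtu : Aᵀ.mulVec u = σ • v) (x0 : Fin n → ℝ) :
    ∀ (k : ℕ) (α β : ℝ), rkExp A b x0 k (fun x => α * dot x v + β)
      = α * (1 - σ ^ 2 / frobSq A) ^ k * dot x0 v
        + α * (1 - (1 - σ ^ 2 / frobSq A) ^ k) * (dot b u / σ) + β := by
  intro k
  induction k with
  | zero => intro α β; simp [rkExp]
  | succ k ih =>
    intro α β
    rw [show rkExp A b x0 (k+1) (fun x => α * dot x v + β)
        = rkExp A b x0 k (fun x => ∑ i, normSq (A i) / frobSq A *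
            (α * dot (rkStep A b i x) v + β)) from rfl]
    have hfun : (fun x => ∑ i, normSq (A i) / frobSq A * (α * dot (rkStep A b i x) v + β))
        = fun x => (α * (1 - σ ^ 2 / frobSq A)) * dot x v
            + (α * σ * dot b u / frobSq A + β) := by
      funext x
      rw [step_sum A b hF hrows σ u v hAv hAtu α β x]
    rw [hfun, ih]
    rw [pow_succ]
    have h : σ / frobSq A = σ ^ 2 / frobSq A / σ := by rw [eq_div_iff hσ]; ring
    linear_combination (α * dot b u) * h


/-- **Theorem 3.2 (convergence along singular vectors, doubly noisy case).** For the RK iterates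
of `Ãx ≈ b̃` with arbitrary `x₀`, any nonzero singular value `σ̃ⱼ > 0` of `Ã` with associated
left/right singular vectors `ũⱼ, ṽⱼ`, and any `x⋆`:
`𝔼⟨x_k − x₀ⁿ − x⋆ʳ, ṽⱼ⟩ = (1 − σ̃ⱼ²/‖Ã‖_F²)^k ⟨x₀ʳ − x⋆ʳ, ṽⱼ⟩
   − [1 − (1 − σ̃ⱼ²/‖Ã‖_F²)^k] ⟨Ã x⋆ − b̃, ũⱼ⟩ / σ̃ⱼ`. -/
theorem rk_singular_vector_dynamics {m n : ℕ}
    (At : Matrix (Fin m) (Fin n) ℝ) (bt : Fin m → ℝ)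
    (hAt : At ≠ 0) (hrows : ∀ i, At i ≠ 0)
    (σj : ℝ) (hσj : 0 < σj) (u : Fin m → ℝ) (v : Fin n → ℝ)
    (hu : normSq u = 1) (hv : normSq v = 1)
    (hAv : At.mulVec v = σj • u) (hAtu : Atᵀ.mulVec u = σj • v)
    (x0 xstar x0r x0n xsr xsn : Fin n → ℝ)
    (hx0r : x0r ∈ rowSpace At) (hx0n : x0n ∈ nullSpace At) (hx0 : x0 = x0r + x0n)
    (hxsr : xsr ∈ rowSpace At) (hxsn : xsn ∈ nullSpace At) (hxs : xstar = xsr + xsn)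
    (k : ℕ) :
    rkExp At bt x0 k (fun x => dot (x - x0n - xsr) v) =
      (1 - σj ^ 2 / frobSq At) ^ k * dot (x0r - xsr) v
        - (1 - (1 - σj ^ 2 / frobSq At) ^ k) * (dot (At.mulVec xstar - bt) u / σj) := by
  have hσ : σj ≠ 0 := ne_of_gt hσj
  have hF : frobSq At ≠ 0 := (frobSq_pos At hAt).ne'
  have hnull : ∀ w ∈ nullSpace At, dot w v = 0 := by
    intro w hw
    have hv' : v = σj⁻¹ • (Atᵀ.mulVec u) := by
      rw [hAtu, smul_smul, inv_mul_cancel₀ hσ, one_smul]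
    rw [hv', dot_smul_right, ← dot_mulVec, hw]
    simp [dot]
  have h0n : dot x0n v = 0 := hnull _ hx0n
  have hsn : dot xsn v = 0 := hnull _ hxsn
  have hfun : (fun x => dot (x - x0n - xsr) v) = fun x => 1 * dot x v + (-(dot xsr v)) := by
    funext x; rw [dot_sub_left, dot_sub_left, h0n]; ring
  rw [hfun, rkExp_affine At bt hF hrows σj hσ u v hAv hAtu x0 k 1 (-(dot xsr v))]
  have hx0v : dot x0 v = dot x0r v := by rw [hx0, dot_add_left, h0n, add_zero]
  have hAxs : dot (At.mulVec xstar - bt) u = σj * dot xsr v - dot bt u := by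
    rw [dot_sub_left, dot_mulVec, hAtu, dot_smul_right, hxs, dot_add_left, hsn]
    ring
  rw [hx0v, hAxs, dot_sub_left x0r xsr v]
  field_simp
  ring

end RK
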